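/- Let q be a prime power, 𝔽_q a finite field of order q, and let s, m ≥ 1 be integers such that s+1 divides m+1. Then there exists a family 𝒮 of (s+1)-dimensional linear subspaces of 𝔽_q^{m+1} of cardinality (q^{m+1}−1)/(q^{s+1}−1) such that every nonzero vector of 𝔽_q^{m+1} lies in exactly one member of 𝒮 (equivalently, the point sets of the corresponding copies of PG₁(s,q) partition the points of PG₁(m,q)). -/

import Mathlib

open Polynomial

section Aux

lemma aux_card (F : Type) [Field F] [Fintype F] (p n N : ℕ) [h_prime : Fact p.Prime] [CharP F p]
    (hFc : Fintype.card F = p ^ n) (hn : n ≠ 0) (hN : n ∣ N) (hN0 : N ≠ 0) :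
    Nat.card (SplittingField (X ^ p ^ N - X : F[X])) = p ^ N := by
  classical
  set K := SplittingField (X ^ p ^ N - X : F[X]) with hKdef
  haveI : CharP K p := (Algebra.charP_iff F K p).mp (by infer_instance)
  haveI : FiniteDimensional F K := by dsimp only [K]; infer_instance
  haveI : Finite K := Module.finite_of_finite F
  haveI : Fintype K := Fintype.ofFinite K
  set g_poly := (X ^ p ^ N - X : F[X]) with hg
  have hp : 1 < p := h_prime.out.one_lt
  have aux : g_poly ≠ 0 := FiniteField.X_pow_card_pow_sub_X_ne_zero _ hN0 hp
  have key : Fintype.card ((X ^ p ^ N - X : F[X]).rootSet K) = (X ^ p ^ N - X : F[X]).natDegree :=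
    card_rootSet_eq_natDegree (galois_poly_separable p _ (dvd_pow (dvd_refl p) hN0))
      (SplittingField.splits (X ^ p ^ N - X : F[X]))
  have nat_degree_eq : (X ^ p ^ N - X : F[X]).natDegree = p ^ N :=
    FiniteField.X_pow_card_pow_sub_X_natDegree_eq _ hN0 hp
  rw [nat_degree_eq] at key
  suffices hu : (X ^ p ^ N - X : F[X]).rootSet K = Set.univ by
    rw [Nat.card_eq_fintype_card]
    simp_rw [hu, ← Fintype.ofEquiv_card (Equiv.Set.univ _)] at key
    convert key using 2
  rw [Set.eq_univ_iff_forall]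
  suffices ∀ (x) (_ : x ∈ (⊤ : Subalgebra F K)),
      x ∈ (X ^ p ^ N - X : F[X]).rootSet K by simpa
  rw [← SplittingField.adjoin_rootSet]
  simp_rw [Algebra.mem_adjoin_iff]
  intro x hx
  have hfix : ∀ r : F, r ^ p ^ N = r := by
    obtain ⟨c, rfl⟩ := hN
    intro r
    rw [pow_mul, ← hFc]
    exact FiniteField.pow_card_pow _ _
  cases p; · cases hp
  simp only [g_poly] at aux
  refine Subring.closure_induction ?_ ?_ ?_ ?_ ?_ ?_ hx <;> simp_rw [mem_rootSet_of_ne aux]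
  · rintro x (⟨r, rfl⟩ | hx)
    · simp only [g_poly, map_sub, map_pow, aeval_X]
      rw [← map_pow, hfix r, sub_self]
    · dsimp only [K] at hx
      rwa [mem_rootSet_of_ne aux] at hx
  · rw [← coeff_zero_eq_aeval_zero']
    simp only [g_poly, coeff_X_pow, coeff_X_zero, sub_zero, _root_.map_eq_zero, ite_eq_right_iff,
      one_ne_zero, coeff_sub]
    intro hn
    exact Nat.not_lt_zero 1 (eq_zero_of_pow_eq_zero hn.symm ▸ hp)
  · simp [g_poly]
  · simp only [g_poly, aeval_X_pow, aeval_X, map_sub, add_pow_char_pow, sub_eq_zero]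
    intro x y _ _ hx hy
    rw [hx, hy]
  · intro x _ hx
    simp only [g_poly, sub_eq_zero, aeval_X_pow, aeval_X, map_sub, sub_neg_eq_add] at *
    rw [neg_pow, hx, neg_one_pow_char_pow]
    ring
  · simp only [g_poly, aeval_X_pow, aeval_X, map_sub, mul_pow, sub_eq_zero]
    intro x y _ _ hx hy
    rw [hx, hy]

end Aux

open scoped Classical

/-- if `s + 1` divides `m + 1`, then `PG(m, q)` admits an `s`-spread: a
family of `(q^{m+1} - 1)/(q^{s+1} - 1)` linear subspaces of `𝔽_q^{m+1}`, each of
dimension `s + 1`, such that every nonzero vector lies in exactly one member. -/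
theorem stmt_9 (q s m : ℕ) (hs : 1 ≤ s) (hm : 1 ≤ m) (hdvd : (s + 1) ∣ (m + 1))
    (F : Type) [Field F] [Fintype F] (hF : Fintype.card F = q) :
    ∃ 𝒮 : Finset (Submodule F (Fin (m + 1) → F)),
      (∀ W ∈ 𝒮, Module.finrank F W = s + 1) ∧
      𝒮.card = (q ^ (m + 1) - 1) / (q ^ (s + 1) - 1) ∧
      (∀ x : Fin (m + 1) → F, x ≠ 0 → ∃! W, W ∈ 𝒮 ∧ x ∈ W) := by
  classical
  obtain ⟨k, hk⟩ := hdvd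
  set d := s + 1 with hd
  have hq2 : 2 ≤ q := hF ▸ Fintype.one_lt_card
  set p := ringChar F with hpr
  haveI : CharP F p := ringChar.charP F
  obtain ⟨n, hp, hFc⟩ := FiniteField.card F p
  haveI : Fact p.Prime := ⟨hp⟩
  have hn0 : (n : ℕ) ≠ 0 := n.ne_zero
  set K := SplittingField (X ^ p ^ ((n : ℕ) * d) - X : F[X]) with hKdef
  haveI : FiniteDimensional F K := by dsimp only [K]; infer_instance
  haveI : Finite K := Module.finite_of_finite F
  haveI : Fintype K := Fintype.ofFinite K
  have hKcard : Fintype.card K = q ^ d := by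
    rw [← Nat.card_eq_fintype_card,
      aux_card F p n (n * d) hFc hn0 (Dvd.intro d rfl) (by positivity),
      pow_mul, ← hFc, hF]
  have hKrank : Module.finrank F K = d := by
    have h1 : Fintype.card K = q ^ Module.finrank F K := by
      rw [Module.card_eq_pow_finrank (K := F) (V := K), hF]
    exact Nat.pow_right_injective hq2 (h1.symm.trans hKcard)
  -- the vector space
  set V := Fin k → K with hV
  haveI : FiniteDimensional K V := by infer_instance
  haveI : FiniteDimensional F V := FiniteDimensional.trans F K V
  have hVrank : Module.finrank F V = m + 1 := by
    rw [← Module.finrank_mul_finrank F K V, hKrank, Module.finrank_fin_fun, ← hk]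
  haveI : Fintype V := Fintype.ofFinite V
  have hVcard : Fintype.card V = q ^ (m + 1) := by
    rw [Module.card_eq_pow_finrank (K := F) (V := V), hF, hVrank]
  -- the spread in V
  set φ : V → Submodule F V := fun v => (Submodule.span K {v}).restrictScalars F with hφ
  have hmemφ : ∀ v : V, v ∈ φ v := fun v =>
    Submodule.mem_span_singleton_self v
  have hC : ∀ u v : V, u ≠ 0 → u ∈ φ v → φ u = φ v := by
    intro u v hu huv
    obtain ⟨c, rfl⟩ := Submodule.mem_span_singleton.mp huv
    have hc : c ≠ 0 := by rintro rfl; simp at hu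
    simp only [hφ]
    rw [Submodule.span_singleton_smul_eq (IsUnit.mk0 c hc)]
  have hrankφ : ∀ v : V, v ≠ 0 → Module.finrank F (φ v) = d := by
    intro v hv
    have h1 : Module.finrank K (Submodule.span K {v}) = 1 := finrank_span_singleton hv
    have := Module.finrank_mul_finrank F K (Submodule.span K {v})
    rw [h1, mul_one] at this
    calc Module.finrank F (φ v)
        = Module.finrank F (Submodule.span K {v}) := LinearEquiv.finrank_eq
          ((Submodule.restrictScalarsEquiv F K V (Submodule.span K {v})).restrictScalars F)
      _ = Module.finrank F K := this.symm
      _ = d := hKrank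
  have hcardφ : ∀ v : V, v ≠ 0 → Fintype.card (φ v) = q ^ d := by
    intro v hv
    rw [Module.card_eq_pow_finrank (K := F) (V := (φ v)), hF, hrankφ v hv]
  set T : Finset V := Finset.univ.filter (fun v => v ≠ 0) with hT
  have hTcard : T.card = q ^ (m + 1) - 1 := by
    rw [hT, Finset.filter_ne', Finset.card_erase_of_mem (Finset.mem_univ 0),
      Finset.card_univ, hVcard]
  set S0 : Finset (Submodule F V) := T.image φ with hS0
  have hfiber : ∀ v : V, v ≠ 0 → (T.filter (fun u => φ u = φ v)).card = q ^ d - 1 := by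
    intro v hv
    have he : T.filter (fun u => φ u = φ v)
        = (Finset.univ.filter (fun u => u ∈ φ v)).erase 0 := by
      ext u
      simp only [hT, Finset.mem_filter, Finset.mem_univ, true_and, Finset.mem_erase,
        Finset.filter_filter]
      constructor
      · rintro ⟨hu, he⟩; exact ⟨hu, he ▸ hmemφ u⟩
      · rintro ⟨hu, he⟩; exact ⟨hu, hC u v hu he⟩
    rw [he, Finset.card_erase_of_mem (by simp [Submodule.zero_mem]),
      ← Fintype.card_subtype, hcardφ v hv]
  have hS0card : S0.card * (q ^ d - 1) = q ^ (m + 1) - 1 := by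
    rw [← hTcard, Finset.card_eq_sum_card_fiberwise
      (f := φ) (t := S0) (fun x hx => Finset.mem_image_of_mem φ hx)]
    rw [Finset.sum_congr rfl (fun W hW => ?_), Finset.sum_const, smul_eq_mul]
    obtain ⟨v, hv, rfl⟩ := Finset.mem_image.mp hW
    have hv0 : v ≠ 0 := (Finset.mem_filter.mp hv).2
    exact hfiber v hv0
  have hqd1 : 0 < q ^ d - 1 := by
    have : 2 ≤ q ^ d := le_trans hq2 (Nat.le_self_pow (by positivity) q)
    omega
  have hS0card' : S0.card = (q ^ (m + 1) - 1) / (q ^ d - 1) :=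
    (Nat.div_eq_of_eq_mul_left hqd1 hS0card.symm).symm
  -- transport along a linear equivalence
  have hrankW : Module.finrank F (Fin (m + 1) → F) = m + 1 := Module.finrank_fin_fun F
  let e : V ≃ₗ[F] (Fin (m + 1) → F) :=
    LinearEquiv.ofFinrankEq V (Fin (m + 1) → F) (by rw [hVrank, hrankW])
  refine ⟨S0.image (Submodule.map (e : V →ₗ[F] (Fin (m + 1) → F))), ?_, ?_, ?_⟩
  · intro W hW
    obtain ⟨U, hU, rfl⟩ := Finset.mem_image.mp hW
    obtain ⟨v, hv, rfl⟩ := Finset.mem_image.mp hU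
    have hv0 : v ≠ 0 := (Finset.mem_filter.mp hv).2
    rw [LinearEquiv.finrank_map_eq e, hrankφ v hv0]
  · have hinj := Finset.card_image_of_injective S0
      (Submodule.map_injective_of_injective (f := (e : V →ₗ[F] (Fin (m + 1) → F))) e.injective)
    rw [hinj, hS0card']
  · intro x hx
    set v : V := e.symm x with hv
    have hv0 : v ≠ 0 := fun h => hx (by
      have := congrArg e h
      simpa [hv] using this)
    refine ⟨Submodule.map (e : V →ₗ[F] _) (φ v), ⟨Finset.mem_image_of_mem _
      (Finset.mem_image_of_mem φ (Finset.mem_filter.mpr ⟨Finset.mem_univ v, hv0⟩)),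
      (Submodule.mem_map_equiv _).mpr (hmemφ v)⟩, ?_⟩
    rintro W ⟨hW, hxW⟩
    obtain ⟨U, hU, rfl⟩ := Finset.mem_image.mp hW
    obtain ⟨u, hu, rfl⟩ := Finset.mem_image.mp hU
    have hu0 : u ≠ 0 := (Finset.mem_filter.mp hu).2
    have hvu : v ∈ φ u := (Submodule.mem_map_equiv _).mp hxW
    rw [hC v u hv0 hvu]
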